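/- For 0<|q|<1 and nonzero x: j(x;q) j(-x^3;q^6) = J_{3,15}[ q^3 x^{-2} j(-q^{-3} x^5; q^{10}) - x j(-q^3 x^5; q^{10}) ] + J_{6,15}[ j(-q x^5; q^{10}) - q x^{-1} j(-q^{-1} x^5; q^{10}) ], where j(x;q) := (x;q)_∞(q/x;q)_∞(q;q)_∞ and J_{a,m} := j(q^a;q^m). -/

import Mathlib

noncomputable def qPochInf (x q : ℂ) : ℂ := ∏' i : ℕ, (1 - q ^ i * x)

noncomputable def jt (x q : ℂ) : ℂ := qPochInf x q * qPochInf (q / x) q * qPochInf q q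

noncomputable def appellLerch (x q z : ℂ) : ℂ :=
  (jt z q)⁻¹ * ∑' r : ℤ, (-1) ^ r * q ^ (r * (r - 1) / 2) * z ^ r / (1 - q ^ (r - 1) * x * z)

noncomputable def qPochFin (x q : ℂ) (n : ℕ) : ℂ := ∏ i ∈ Finset.range n, (1 - q ^ i * x)

open Filter Finset Topology


def cexp (n : ℤ) : ℤ := n * (n - 1) / 2

lemma two_cexp (n : ℤ) : 2 * cexp n = n * (n - 1) := by
  have h : (2:ℤ) ∣ n * (n - 1) := by
    rcases Int.even_or_odd n with h | h
    · exact Dvd.dvd.mul_right h.two_dvd _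
    · refine Dvd.dvd.mul_left ?_ _
      rcases h with ⟨k, hk⟩
      exact ⟨k, by omega⟩
  exact Int.mul_ediv_cancel' h

lemma cexp_eq {n m : ℤ} (h : 2 * m = n * (n - 1)) : cexp n = m :=
  mul_left_cancel₀ two_ne_zero ((two_cexp n).trans h.symm)

lemma cexp_add (a b : ℤ) : cexp (a + b) = cexp a + cexp b + a * b := by
  refine cexp_eq ?_
  have ha := two_cexp a; have hb := two_cexp b
  nlinarith [ha, hb]

lemma cexp_nonneg (n : ℤ) : 0 ≤ cexp n := by
  have := two_cexp n
  nlinarith [sq_nonneg n, sq_nonneg (n - 1)]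

lemma cexp_one : cexp 1 = 0 := rfl

noncomputable def th (x q : ℂ) : ℂ := ∑' n : ℤ, (-1 : ℂ) ^ n * q ^ cexp n * x ^ n

lemma summable_th_aux {ρ c : ℝ} (hρ0 : 0 < ρ) (hρ : ρ < 1) (hc : 0 < c) :
    Summable (fun n : ℤ => ρ ^ cexp n * c ^ n) := by
  have hρne : ρ ≠ 0 := ne_of_gt hρ0
  have hcne : c ≠ 0 := ne_of_gt hc
  have key : ∀ d : ℝ, 0 < d → Tendsto (fun n : ℕ => ρ ^ (n : ℤ) * d) atTop (𝓝 0) := by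
    intro d hd
    have h2 : Tendsto (fun n : ℕ => ρ ^ n * d) atTop (𝓝 (0 * d)) :=
      (tendsto_pow_atTop_nhds_zero_of_lt_one hρ0.le hρ).mul_const d
    rw [zero_mul] at h2
    exact h2.congr (fun n => by rw [zpow_natCast])
  apply Summable.of_nat_of_neg
  · apply summable_of_ratio_test_tendsto_lt_one (l := 0) one_pos
    · filter_upwards with n
      positivity
    · have heq : ∀ n : ℕ, ‖ρ ^ cexp ((n+1:ℕ):ℤ) * c ^ (((n:ℕ):ℤ)+1)‖ / ‖ρ ^ cexp ((n:ℕ):ℤ) * c ^ ((n:ℕ):ℤ)‖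
          = ρ ^ ((n:ℕ) : ℤ) * c := by
        intro n
        have h1 : cexp ((n:ℤ) + 1) = cexp (n:ℤ) + n := by
          rw [cexp_add]; simp [cexp_one]
        rw [Real.norm_of_nonneg (by positivity), Real.norm_of_nonneg (by positivity)]
        push_cast
        rw [h1, zpow_add₀ hρne, zpow_add₀ hcne]
        field_simp
      refine (key c hc).congr (fun n => ?_)
      rw [← heq n]
      push_cast
      ring_nf
  · apply summable_of_ratio_test_tendsto_lt_one (l := 0) one_pos
    · filter_upwards with n
      positivity
    · have heq : ∀ n : ℕ, ‖ρ ^ cexp (-((n:ℤ)+1)) * c ^ (-((n:ℤ)+1))‖ / ‖ρ ^ cexp (-(n:ℤ)) * c ^ (-(n:ℤ))‖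
          = ρ ^ ((n : ℤ) + 1) * c⁻¹ := by
        intro n
        have h1 : cexp (-((n:ℤ)+1)) = cexp (-(n:ℤ)) + ((n:ℤ) + 1) := by
          have ha := two_cexp (-((n:ℤ)+1)); have hb := two_cexp (-(n:ℤ))
          refine mul_left_cancel₀ (two_ne_zero (α := ℤ)) ?_
          nlinarith [ha, hb]
        rw [Real.norm_of_nonneg (by positivity), Real.norm_of_nonneg (by positivity)]
        rw [h1, zpow_add₀ hρne, neg_add, zpow_add₀ hcne]
        rw [zpow_neg c 1, zpow_one]
        field_simp
      have key' : Tendsto (fun n : ℕ => ρ ^ ((n:ℤ)+1) * c⁻¹) atTop (𝓝 0) := by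
        have h3 : ∀ n : ℕ, ρ ^ ((n:ℤ)+1) * c⁻¹ = ρ ^ ((n:ℕ):ℤ) * (ρ * c⁻¹) := fun n => by
          rw [zpow_add₀ hρne, zpow_one]; push_cast; ring
        exact (key (ρ * c⁻¹) (by positivity)).congr (fun n => (h3 n).symm)
      refine key'.congr (fun n => ?_)
      rw [← heq n]
      push_cast
      rfl


-- L0
lemma prod_one_add_sub_one_le {ι : Type*} (s : Finset ι) (f : ι → ℂ) :
    ‖∏ i ∈ s, (1 + f i) - 1‖ ≤ ∏ i ∈ s, (1 + ‖f i‖) - 1 := by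
  classical
  induction s using Finset.induction_on with
  | empty => simp
  | @insert j s hj ih =>
    rw [Finset.prod_insert hj, Finset.prod_insert hj]
    have key : (1 + f j) * ∏ i ∈ s, (1 + f i) - 1
        = (1 + f j) * (∏ i ∈ s, (1 + f i) - 1) + f j := by ring
    rw [key]
    have h1 : ‖(1 + f j) * (∏ i ∈ s, (1 + f i) - 1) + f j‖
        ≤ (1 + ‖f j‖) * ‖∏ i ∈ s, (1 + f i) - 1‖ + ‖f j‖ := by
      calc ‖(1 + f j) * (∏ i ∈ s, (1 + f i) - 1) + f j‖
          ≤ ‖(1 + f j) * (∏ i ∈ s, (1 + f i) - 1)‖ + ‖f j‖ := norm_add_le _ _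
        _ ≤ (1 + ‖f j‖) * ‖∏ i ∈ s, (1 + f i) - 1‖ + ‖f j‖ := by
            rw [norm_mul]
            gcongr
            calc ‖1 + f j‖ ≤ ‖(1:ℂ)‖ + ‖f j‖ := norm_add_le _ _
              _ = 1 + ‖f j‖ := by simp
    refine h1.trans ?_
    have h2 : ‖∏ i ∈ s, (1 + f i) - 1‖ ≤ ∏ i ∈ s, (1 + ‖f i‖) - 1 := ih
    nlinarith [norm_nonneg (f j), norm_nonneg (∏ i ∈ s, (1 + f i) - 1)]

lemma prod_one_add_le_exp {ι : Type*} (s : Finset ι) (g : ι → ℝ) (hg : ∀ i, 0 ≤ g i) :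
    ∏ i ∈ s, (1 + g i) ≤ Real.exp (∑ i ∈ s, g i) := by
  rw [Real.exp_sum]
  refine Finset.prod_le_prod (fun i _ => by linarith [hg i]) (fun i _ => ?_)
  linarith [Real.add_one_le_exp (g i)]

lemma norm_prod_one_sub_le_exp (s : Finset ℕ) (f : ℕ → ℂ) :
    ‖∏ i ∈ s, (1 - f i)‖ ≤ Real.exp (∑ i ∈ s, ‖f i‖) := by
  rw [norm_prod]
  refine le_trans (Finset.prod_le_prod (fun i _ => norm_nonneg _) (fun i _ => ?_))
    (prod_one_add_le_exp s (fun i => ‖f i‖) (fun i => norm_nonneg _))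
  calc ‖1 - f i‖ ≤ ‖(1:ℂ)‖ + ‖f i‖ := norm_sub_le _ _
    _ = 1 + ‖f i‖ := by simp

lemma norm_prod_one_sub_sub_one_le (s : Finset ℕ) (f : ℕ → ℂ) :
    ‖∏ i ∈ s, (1 - f i) - 1‖ ≤ Real.exp (∑ i ∈ s, ‖f i‖) - 1 := by
  have h0 : ∏ i ∈ s, (1 - f i) = ∏ i ∈ s, (1 + (- f i)) := by
    refine Finset.prod_congr rfl (fun i _ => by ring)
  rw [h0]
  refine (prod_one_add_sub_one_le s (fun i => - f i)).trans ?_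
  have := prod_one_add_le_exp s (fun i => ‖f i‖) (fun i => norm_nonneg _)
  simp only [norm_neg]
  linarith

lemma multipliable_one_sub {f : ℕ → ℂ} (hf : Summable fun i => ‖f i‖) :
    Multipliable (fun i => 1 - f i) := by
  set u : Finset ℕ → ℂ := fun s => ∏ i ∈ s, (1 - f i) with hu
  have hB : ∀ s : Finset ℕ, ‖u s‖ ≤ Real.exp (∑' i, ‖f i‖) := by
    intro s
    refine (norm_prod_one_sub_le_exp s f).trans (Real.exp_le_exp.2 ?_)
    exact Summable.sum_le_tsum s (fun i _ => norm_nonneg _) hf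
  set B := Real.exp (∑' i, ‖f i‖) with hBdef
  have hBpos : 0 < B := Real.exp_pos _
  have hcauchy : CauchySeq u := by
    rw [Metric.cauchySeq_iff']
    intro ε hε
    -- find δ with B * (exp δ - 1) < ε
    obtain ⟨δ, hδ0, hδ⟩ : ∃ δ > 0, B * (Real.exp δ - 1) < ε := by
      have hcont : Tendsto (fun t => B * (Real.exp t - 1)) (𝓝 0) (𝓝 (B * (Real.exp 0 - 1))) := by
        exact (continuous_const.mul (Real.continuous_exp.sub continuous_const)).tendsto 0
      rw [Real.exp_zero] at hcont
      simp only [sub_self, mul_zero] at hcont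
      have := hcont.eventually (eventually_lt_nhds hε)
      rcases Metric.eventually_nhds_iff.1 this with ⟨δ', hδ'0, hδ'⟩
      exact ⟨δ'/2, by linarith, hδ' (by rw [Real.dist_eq, sub_zero, abs_of_pos (by linarith)]; linarith)⟩
    obtain ⟨T, hT⟩ := hf.vanishing (Metric.ball_mem_nhds 0 hδ0)
    refine ⟨T, fun n hn => ?_⟩
    have hsplit : u n = u T * ∏ i ∈ n \ T, (1 - f i) := by
      rw [hu]
      simp only
      rw [← Finset.prod_sdiff hn]
      ring
    rw [dist_eq_norm, hsplit]
    have : u T * ∏ i ∈ n \ T, (1 - f i) - u T = u T * (∏ i ∈ n \ T, (1 - f i) - 1) := by ring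
    rw [this, norm_mul]
    have h1 : ‖∏ i ∈ n \ T, (1 - f i) - 1‖ ≤ Real.exp δ - 1 := by
      refine (norm_prod_one_sub_sub_one_le _ f).trans ?_
      have hdisj : Disjoint (n \ T) T := Finset.sdiff_disjoint
      have := hT (n \ T) hdisj
      rw [Metric.mem_ball, dist_zero_right, Real.norm_eq_abs] at this
      have habs : ∑ i ∈ n \ T, ‖f i‖ ≤ δ := by
        have : |∑ i ∈ n \ T, ‖f i‖| < δ := this
        have hnn : 0 ≤ ∑ i ∈ n \ T, ‖f i‖ := Finset.sum_nonneg (fun i _ => norm_nonneg _)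
        rw [abs_of_nonneg hnn] at this
        linarith
      have := Real.exp_le_exp.2 habs
      linarith
    calc ‖u T‖ * ‖∏ i ∈ n \ T, (1 - f i) - 1‖ ≤ B * (Real.exp δ - 1) := by
          have h2 : 0 ≤ Real.exp δ - 1 := by
            have := Real.one_le_exp hδ0.le; linarith
          exact mul_le_mul (hB T) h1 (norm_nonneg _) hBpos.le
      _ < ε := hδ
  obtain ⟨a, ha⟩ := cauchySeq_tendsto_of_complete hcauchy
  exact ⟨a, ha⟩

lemma tendsto_prod_range_one_sub {f : ℕ → ℂ} (hf : Summable fun i => ‖f i‖) :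
    Tendsto (fun n => ∏ i ∈ Finset.range n, (1 - f i)) atTop (𝓝 (∏' i, (1 - f i))) :=
  (multipliable_one_sub hf).hasProd.tendsto_prod_nat

lemma tendsto_tail_prod {f : ℕ → ℂ} (hf : Summable fun i => ‖f i‖)
    {s : ℕ → Finset ℕ} (hs : ∀ M : ℕ, ∀ᶠ N in atTop, ∀ i ∈ s N, M ≤ i) :
    Tendsto (fun N => ∏ i ∈ s N, (1 - f i)) atTop (𝓝 1) := by
  rw [Metric.tendsto_nhds]
  intro ε hε
  obtain ⟨δ, hδ0, hδ⟩ : ∃ δ > 0, Real.exp δ - 1 < ε := by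
    have hcont : Tendsto (fun t => Real.exp t - 1) (𝓝 0) (𝓝 (Real.exp 0 - 1)) :=
      (Real.continuous_exp.sub continuous_const).tendsto 0
    rw [Real.exp_zero, sub_self] at hcont
    have := hcont.eventually (eventually_lt_nhds hε)
    rcases Metric.eventually_nhds_iff.1 this with ⟨δ', hδ'0, hδ'⟩
    exact ⟨δ'/2, by linarith, hδ' (by rw [Real.dist_eq, sub_zero, abs_of_pos (by linarith)]; linarith)⟩
  obtain ⟨T, hT⟩ := hf.vanishing (Metric.ball_mem_nhds 0 hδ0)
  set M := (T.sup id) + 1 with hM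
  have hTM : ∀ (t : Finset ℕ), (∀ i ∈ t, M ≤ i) → Disjoint t T := by
    intro t ht
    rw [Finset.disjoint_left]
    intro i hit hiT
    have := Finset.le_sup (f := id) hiT
    have := ht i hit
    simp only [id] at *
    omega
  filter_upwards [hs M] with N hN
  rw [dist_eq_norm]
  have h1 : ‖∏ i ∈ s N, (1 - f i) - 1‖ ≤ Real.exp (∑ i ∈ s N, ‖f i‖) - 1 :=
    norm_prod_one_sub_sub_one_le _ f
  have hdisj := hTM (s N) hN
  have := hT (s N) hdisj
  rw [Metric.mem_ball, dist_zero_right, Real.norm_eq_abs] at this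
  have hnn : 0 ≤ ∑ i ∈ s N, ‖f i‖ := Finset.sum_nonneg (fun i _ => norm_nonneg _)
  rw [abs_of_nonneg hnn] at this
  have := Real.exp_le_exp.2 this.le
  calc ‖∏ i ∈ s N, (1 - f i) - 1‖ ≤ Real.exp (∑ i ∈ s N, ‖f i‖) - 1 := h1
    _ ≤ Real.exp δ - 1 := by linarith
    _ < ε := hδ


noncomputable section

def pq (q : ℂ) (n : ℕ) : ℂ := ∏ i ∈ Finset.range n, (1 - q ^ (i + 1))

def qb (q : ℂ) (n k : ℕ) : ℂ := if k ≤ n then pq q n / (pq q k * pq q (n - k)) else 0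

lemma one_sub_pow_ne {q : ℂ} (hq : ‖q‖ < 1) (i : ℕ) : (1 : ℂ) - q ^ (i + 1) ≠ 0 := by
  intro h
  have h1 : q ^ (i + 1) = 1 := by linear_combination -h
  have : ‖q ^ (i+1)‖ < 1 := by
    rw [norm_pow]
    calc ‖q‖ ^ (i+1) ≤ ‖q‖ ^ 1 := by
          refine pow_le_pow_of_le_one (norm_nonneg q) hq.le (by omega)
      _ < 1 := by simpa using hq
  rw [h1] at this
  simp at this

lemma pq_ne {q : ℂ} (hq : ‖q‖ < 1) (n : ℕ) : pq q n ≠ 0 :=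
  Finset.prod_ne_zero_iff.2 (fun i _ => one_sub_pow_ne hq i)

lemma pq_succ (q : ℂ) (n : ℕ) : pq q (n + 1) = pq q n * (1 - q ^ (n + 1)) :=
  Finset.prod_range_succ _ n

lemma qb_zero (q : ℂ) {hq : ‖q‖ < 1} (n : ℕ) : qb q n 0 = 1 := by
  rw [qb, if_pos (Nat.zero_le n)]
  simp [pq]
  exact pq_ne hq n

lemma qb_of_gt (q : ℂ) {n k : ℕ} (h : n < k) : qb q n k = 0 := by
  rw [qb, if_neg (by omega)]

lemma qb_pascal {q : ℂ} (hq : ‖q‖ < 1) (n k : ℕ) (hk : k ≤ n) :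
    qb q (n + 1) (k + 1) = qb q n (k + 1) + q ^ (n - k) * qb q n k := by
  obtain ⟨m, rfl⟩ : ∃ m, n = k + m := ⟨n - k, by omega⟩
  rcases Nat.eq_zero_or_pos m with rfl | hm
  · have hpq0 : pq q 0 = 1 := by simp [pq]
    simp only [Nat.add_zero, Nat.sub_self, pow_zero, one_mul]
    rw [qb, if_pos le_rfl, qb, if_neg (by omega), qb, if_pos le_rfl]
    simp only [Nat.sub_self, hpq0, mul_one, one_mul]
    rw [div_self (pq_ne hq _), div_self (pq_ne hq _)]
    simp
  · obtain ⟨j, rfl⟩ : ∃ j, m = j + 1 := ⟨m - 1, by omega⟩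
    rw [qb, if_pos (by omega), qb, if_pos (by omega), qb, if_pos (by omega)]
    have e1 : k + (j + 1) + 1 - (k + 1) = j + 1 := by omega
    have e2 : k + (j + 1) - (k + 1) = j := by omega
    have e3 : k + (j + 1) - k = j + 1 := by omega
    rw [e1, e2, e3]
    have h1 : pq q (k + (j + 1) + 1) = pq q (k + (j + 1)) * (1 - q ^ (k + j + 2)) := by
      rw [pq_succ]; ring_nf
    have h2 : pq q (j + 1) = pq q j * (1 - q ^ (j + 1)) := pq_succ q j
    have h3 : pq q (k + 1) = pq q k * (1 - q ^ (k + 1)) := pq_succ q k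
    rw [h1, h2, h3]
    have n1 := pq_ne hq (k + (j+1))
    have n2 := pq_ne hq (k+1)
    have n3 := pq_ne hq j
    have n4 := pq_ne hq k
    have n5 := one_sub_pow_ne hq j
    have n6 := one_sub_pow_ne hq k
    have n7 := one_sub_pow_ne hq (k + j + 1)
    field_simp
    ring
lemma cauchy_binomial {q : ℂ} (hq : ‖q‖ < 1) (n : ℕ) (t : ℂ) :
    ∏ i ∈ Finset.range n, (1 + t * q ^ i)
      = ∑ k ∈ Finset.range (n + 1), q ^ (k * (k - 1) / 2) * qb q n k * t ^ k := by
  induction n with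
  | zero =>
    simp [qb_zero q (hq := hq)]
  | succ n ih =>
    rw [Finset.prod_range_succ, ih]
    have extend : ∑ k ∈ Finset.range (n + 1), q ^ (k * (k - 1) / 2) * qb q n k * t ^ k
        = ∑ k ∈ Finset.range (n + 2), q ^ (k * (k - 1) / 2) * qb q n k * t ^ k := by
      rw [Finset.sum_range_succ (n := n + 1)]
      rw [qb_of_gt q (by omega)]
      ring
    have key : ∀ k ≤ n, q ^ ((k+1) * k / 2) * qb q (n+1) (k+1)
        = q ^ ((k+1) * k / 2) * qb q n (k+1) + q ^ (k * (k - 1) / 2) * qb q n k * q ^ n := by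
      intro k hk
      rw [qb_pascal hq n k hk]
      have haux : (k+1) * k = k * (k - 1) + 2 * k := by
        cases k with
        | zero => rfl
        | succ m => simp only [Nat.succ_sub_one]; ring
      have hexp : (k+1) * k / 2 + (n - k) = k * (k - 1) / 2 + n := by omega
      rw [mul_add]
      congr 1
      rw [← mul_assoc, mul_comm (q ^ ((k+1)*k/2)) (q ^ (n-k)), ← pow_add]
      rw [mul_assoc, mul_comm (qb q n k) (q ^ n), ← mul_assoc, ← pow_add]
      rw [Nat.add_comm (n-k) ((k+1)*k/2), hexp]
    -- expand target
    rw [Finset.sum_range_succ' (fun k => q ^ (k * (k - 1) / 2) * qb q (n+1) k * t ^ k) (n+1)]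
    rw [mul_add, mul_one, Finset.sum_mul, extend]
    rw [Finset.sum_range_succ' (fun k => q ^ (k * (k - 1) / 2) * qb q n k * t ^ k) (n+1)]
    have hz : qb q (n+1) 0 = qb q n 0 := by
      rw [qb_zero q (hq := hq), qb_zero q (hq := hq)]
    simp only [hz]
    rw [add_right_comm]
    congr 1
    rw [← Finset.sum_add_distrib]
    refine Finset.sum_congr rfl (fun k hk => ?_)
    have hk' : k ≤ n := Nat.lt_succ_iff.mp (Finset.mem_range.mp hk)
    have hkey := key k hk'
    simp only [Nat.add_sub_cancel]
    linear_combination (-(t ^ (k+1))) * hkey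

section JTP
variable {q x : ℂ}

lemma cexp_natCast (k : ℕ) : cexp (k : ℤ) = ((k * (k - 1) / 2 : ℕ) : ℤ) := by
  refine cexp_eq ?_
  cases k with
  | zero => simp
  | succ m =>
    have hev : 2 ∣ (m+1) * m := by
      rcases Nat.even_or_odd m with h | h
      · exact Dvd.dvd.mul_left h.two_dvd _
      · obtain ⟨k, hk⟩ := h
        exact Dvd.dvd.mul_right ⟨k+1, by omega⟩ _
    have h2 : 2 * ((m+1) * m / 2) = (m+1) * m := Nat.mul_div_cancel' hev
    have h3 := congrArg (fun z : ℕ => (z : ℤ)) h2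
    push_cast at h3
    simp only [Nat.add_sub_cancel]
    push_cast
    linarith

lemma prod_zpow_range (a : ℂ) (ha : a ≠ 0) (f : ℕ → ℤ) (N : ℕ) :
    ∏ i ∈ Finset.range N, a ^ f i = a ^ (∑ i ∈ Finset.range N, f i) := by
  induction N with
  | zero => simp
  | succ n ih => rw [Finset.prod_range_succ, Finset.sum_range_succ, ih, zpow_add₀ ha]

lemma sum_neg_range (N : ℕ) :
    ∑ i ∈ Finset.range N, (-((i:ℕ)+1:ℤ)) = -(cexp ((N:ℤ)+1)) := by
  induction N with
  | zero => simp [cexp]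
  | succ n ih =>
    rw [Finset.sum_range_succ, ih]
    have h1 : cexp (((n:ℤ)+1)+1) = cexp ((n:ℤ)+1) + ((n:ℤ)+1) := by
      rw [cexp_add]; simp [cexp_one]
    push_cast
    rw [h1]
    ring

lemma prod_shift (hq0 : q ≠ 0) (hx : x ≠ 0) (N : ℕ) :
    ∏ i ∈ Finset.range (2*N), (1 - x * q ^ ((i:ℤ) - N))
      = ((-1:ℂ)^N * x^N * q^(-(cexp ((N:ℤ)+1)))) *
        ((∏ i ∈ Finset.range N, (1 - q^(i+1) * x⁻¹)) * ∏ i ∈ Finset.range N, (1 - q^i * x)) := by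
  have h2N : 2*N = N + N := by ring
  rw [h2N, Finset.prod_range_add]
  have hsec : ∀ i ∈ Finset.range N, (1 - x * q ^ (((N+i:ℕ):ℤ) - N)) = 1 - q^i * x := by
    intro i _
    have h : ((N+i:ℕ):ℤ) - N = i := by push_cast; ring
    rw [h, zpow_natCast]; ring
  rw [Finset.prod_congr rfl hsec]
  have hfirst : ∏ i ∈ Finset.range N, (1 - x * q ^ ((i:ℤ) - N))
      = ((-1:ℂ)^N * x^N * q^(-(cexp ((N:ℤ)+1)))) * ∏ i ∈ Finset.range N, (1 - q^(i+1) * x⁻¹) := by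
    rw [← Finset.prod_range_reflect (fun i => 1 - x * q ^ ((i:ℤ) - N)) N]
    have hterm : ∀ i ∈ Finset.range N,
        (1 - x * q ^ (((N - 1 - i : ℕ):ℤ) - N)) = (-(x * q^(-((i:ℕ)+1:ℤ)))) * (1 - q^(i+1) * x⁻¹) := by
      intro i hi
      have hiN : i < N := Finset.mem_range.mp hi
      have h : ((N - 1 - i : ℕ):ℤ) - N = -((i:ℤ)+1) := by
        have : (N - 1 - i : ℕ) = N - (i+1) := by omega
        rw [this]
        push_cast [Nat.cast_sub (by omega : i+1 ≤ N)]
        ring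
      rw [h]
      have hq1 : (q:ℂ) ^ ((i:ℤ)+1) = q ^ (i+1) := by
        rw [← zpow_natCast]; norm_num
      have hqq : q ^ (-((i:ℤ)+1)) * q ^ (i+1) = 1 := by
        rw [← hq1, ← zpow_add₀ hq0, show -((i:ℤ)+1) + ((i:ℤ)+1) = 0 by ring, zpow_zero]
      have hxx : x * x⁻¹ = 1 := mul_inv_cancel₀ hx
      linear_combination (-1 : ℂ) * hxx + (-(x * x⁻¹)) * hqq
    have hsum := sum_neg_range N
    rw [Finset.prod_congr rfl hterm, Finset.prod_mul_distrib]
    congr 1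
    have hfac : ∀ i ∈ Finset.range N, (-(x * q^(-((i:ℕ)+1:ℤ)))) = (-1) * x * q^(-((i:ℕ)+1:ℤ)) := by
      intro i _; ring
    rw [Finset.prod_congr rfl hfac, Finset.prod_mul_distrib, Finset.prod_mul_distrib,
      Finset.prod_const, Finset.prod_const, Finset.card_range, prod_zpow_range q hq0, hsum]
  rw [hfirst]
  ring
end JTP

section JTP2
variable {q x : ℂ}

lemma finite_jtp (hq0 : q ≠ 0) (hq : ‖q‖ < 1) (hx : x ≠ 0) (N : ℕ) :
    pq q (2*N) * ((∏ i ∈ Finset.range N, (1 - q^i * x)) * ∏ i ∈ Finset.range N, (1 - q^(i+1) * x⁻¹))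
      = ∑ k ∈ Finset.range (2*N+1),
          (-1:ℂ)^((k:ℤ) - N) * q^(cexp ((k:ℤ) - N)) * x^((k:ℤ) - N) * (pq q (2*N) * qb q (2*N) k) := by
  have hne1 : (-1:ℂ) ≠ 0 := by norm_num
  have hc := cauchy_binomial hq (2*N) (-(x * q^(-(N:ℤ))))
  have hL : ∀ i ∈ Finset.range (2*N), (1 + (-(x * q^(-(N:ℤ)))) * q^i) = 1 - x * q^((i:ℤ) - N) := by
    intro i _
    have hqi : q^(-(N:ℤ)) * q^i = q^((i:ℤ) - N) := by
      rw [← zpow_natCast q i, ← zpow_add₀ hq0]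
      congr 1
      ring
    linear_combination (-x : ℂ) * hqi
  rw [Finset.prod_congr rfl hL, prod_shift hq0 hx N] at hc
  have h1 : ((-1:ℂ)^N) * ((-1:ℂ)^N) = 1 := by
    rw [← pow_add]
    exact Even.neg_one_pow ⟨N, rfl⟩
  have h2 : x^(N:ℕ) * x^(-(N:ℤ)) = 1 := by
    rw [← zpow_natCast x N, ← zpow_add₀ hx, show (N:ℤ) + -(N:ℤ) = 0 by ring, zpow_zero]
  have h3 : q^(cexp ((N:ℤ)+1)) * q^(-(cexp ((N:ℤ)+1))) = 1 := by
    rw [← zpow_add₀ hq0, show cexp ((N:ℤ)+1) + -(cexp ((N:ℤ)+1)) = 0 by ring, zpow_zero]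
  have step1 : pq q (2*N) * ((∏ i ∈ Finset.range N, (1 - q^i * x)) * ∏ i ∈ Finset.range N, (1 - q^(i+1) * x⁻¹))
      = ((-1:ℂ)^N * x^(-(N:ℤ)) * q^(cexp ((N:ℤ)+1)) * pq q (2*N)) *
        (((-1:ℂ)^N * x^(N:ℕ) * q^(-(cexp ((N:ℤ)+1)))) *
          ((∏ i ∈ Finset.range N, (1 - q^(i+1) * x⁻¹)) * ∏ i ∈ Finset.range N, (1 - q^i * x))) := by
    set P1 := ∏ i ∈ Finset.range N, (1 - q^i * x)
    set P2 := ∏ i ∈ Finset.range N, (1 - q^(i+1) * x⁻¹)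
    linear_combination
      (-(pq q (2*N) * P1 * P2) * (x^(N:ℕ) * x^(-(N:ℤ))) * (q^(cexp ((N:ℤ)+1)) * q^(-(cexp ((N:ℤ)+1))))) * h1
      + (-(pq q (2*N) * P1 * P2) * (q^(cexp ((N:ℤ)+1)) * q^(-(cexp ((N:ℤ)+1))))) * h2
      + (-(pq q (2*N) * P1 * P2)) * h3
  rw [step1, hc, Finset.mul_sum]
  refine Finset.sum_congr rfl (fun k hk => ?_)
  have hsgn : (-1:ℂ)^((k:ℤ)-(N:ℤ)) = (-1:ℂ)^(k:ℕ) * (-1:ℂ)^(N:ℕ) := by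
    have hi : ((-1:ℂ)^(N:ℕ))⁻¹ = (-1:ℂ)^(N:ℕ) := by
      rw [← inv_pow, inv_neg, inv_one]
    rw [zpow_sub₀ hne1, zpow_natCast, zpow_natCast, div_eq_mul_inv, hi]
  have hxp : x^((k:ℤ)-(N:ℤ)) = x^(k:ℕ) * x^(-(N:ℤ)) := by
    rw [sub_eq_add_neg, zpow_add₀ hx, zpow_natCast]
  have hqE : cexp ((k:ℤ)-(N:ℤ)) = cexp ((N:ℤ)+1) + ((k*(k-1)/2 : ℕ):ℤ) + (-(N:ℤ))*k := by
    rw [← cexp_natCast k]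
    refine cexp_eq ?_
    linear_combination two_cexp ((N:ℤ)+1) + two_cexp (k:ℤ)
  have hqp : q^(cexp ((k:ℤ)-(N:ℤ))) = q^(cexp ((N:ℤ)+1)) * q^(k*(k-1)/2 : ℕ) * q^((-(N:ℤ))*(k:ℤ)) := by
    rw [hqE, zpow_add₀ hq0, zpow_add₀ hq0, zpow_natCast]
  have htk : (-(x * q^(-(N:ℤ))))^(k:ℕ) = (-1:ℂ)^(k:ℕ) * x^(k:ℕ) * q^((-(N:ℤ))*(k:ℤ)) := by
    rw [show -(x * q^(-(N:ℤ))) = (-1) * (x * q^(-(N:ℤ))) by ring, mul_pow, mul_pow]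
    rw [← zpow_natCast (q^(-(N:ℤ))) k, ← zpow_mul]
    ring
  rw [hsgn, hxp, hqp, htk]
  ring
end JTP2

section JTP3
variable {q x : ℂ}


lemma summable_th_norm (hq0 : q ≠ 0) (hq : ‖q‖ < 1) (hx : x ≠ 0) :
    Summable (fun n : ℤ => ‖(-1:ℂ)^n * q^(cexp n) * x^n‖) := by
  refine (summable_th_aux (norm_pos_iff.mpr hq0) hq (norm_pos_iff.mpr hx)).congr (fun n => ?_)
  rw [norm_mul, norm_mul, norm_zpow, norm_zpow, norm_zpow]
  norm_num

lemma summable_geom_shift (hq : ‖q‖ < 1) (c : ℂ) :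
    Summable (fun i : ℕ => ‖q^(i+1) * c‖) := by
  refine Summable.congr (f := fun i : ℕ => (‖q‖ * ‖c‖) * ‖q‖^i) ?_ (fun i => ?_)
  · exact (summable_geometric_of_lt_one (norm_nonneg q) hq).mul_left _
  · rw [norm_mul, norm_pow, pow_succ]
    ring

lemma pq_qb_eq_tails (hq : ‖q‖ < 1) {N k : ℕ} (hk : k ≤ 2*N) :
    pq q (2*N) * qb q (2*N) k
      = (∏ i ∈ Finset.Ico k (2*N), (1 - q^(i+1))) * (∏ i ∈ Finset.Ico (2*N-k) (2*N), (1 - q^(i+1))) := by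
  have h1 : pq q k * ∏ i ∈ Finset.Ico k (2*N), (1 - q^(i+1)) = pq q (2*N) :=
    Finset.prod_range_mul_prod_Ico _ hk
  have h2 : pq q (2*N-k) * ∏ i ∈ Finset.Ico (2*N-k) (2*N), (1 - q^(i+1)) = pq q (2*N) :=
    Finset.prod_range_mul_prod_Ico _ (by omega)
  have key : pq q (2*N) * pq q (2*N)
      = ((∏ i ∈ Finset.Ico k (2*N), (1 - q^(i+1))) * ∏ i ∈ Finset.Ico (2*N-k) (2*N), (1 - q^(i+1)))
        * (pq q k * pq q (2*N-k)) := by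
    linear_combination (-(pq q (2*N-k) * ∏ i ∈ Finset.Ico (2*N-k) (2*N), (1 - q^(i+1)))) * h1
      + (-(pq q (2*N))) * h2
  have hk' := pq_ne hq k
  have hnk' := pq_ne hq (2*N-k)
  rw [qb, if_pos hk, mul_div_assoc', key, mul_div_assoc]
  rw [div_self (mul_ne_zero hk' hnk'), mul_one]

noncomputable def Wfn (q x : ℂ) (N : ℕ) (j : ℤ) : ℂ :=
  if -(N:ℤ) ≤ j ∧ j ≤ N then
    (-1:ℂ)^j * q^(cexp j) * x^j * (pq q (2*N) * qb q (2*N) (j + N).toNat) else 0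

lemma sum_eq_tsum_W (N : ℕ) :
    ∑ k ∈ Finset.range (2*N+1),
        (-1:ℂ)^((k:ℤ) - N) * q^(cexp ((k:ℤ) - N)) * x^((k:ℤ) - N) * (pq q (2*N) * qb q (2*N) k)
      = ∑' j : ℤ, Wfn q x N j := by
  rw [tsum_eq_sum (s := Finset.Icc (-(N:ℤ)) N) (fun j hj => by
    rw [Wfn, if_neg]
    intro ⟨h1, h2⟩
    exact hj (Finset.mem_Icc.mpr ⟨h1, h2⟩))]
  refine Finset.sum_nbij' (fun k => (k:ℤ) - N) (fun j => (j + N).toNat) ?_ ?_ ?_ ?_ ?_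
  · intro k hk
    have := Finset.mem_range.mp hk
    rw [Finset.mem_Icc]
    omega
  · intro j hj
    have := Finset.mem_Icc.mp hj
    rw [Finset.mem_range]
    omega
  · intro k hk
    have := Finset.mem_range.mp hk
    omega
  · intro j hj
    have := Finset.mem_Icc.mp hj
    omega
  · intro k hk
    have hk' := Finset.mem_range.mp hk
    have hcond : -(N:ℤ) ≤ (k:ℤ) - N ∧ (k:ℤ) - N ≤ N := by omega
    rw [Wfn, if_pos hcond, show ((k:ℤ) - N + N).toNat = k by omega]

lemma W_tendsto (hq0 : q ≠ 0) (hq : ‖q‖ < 1) (j : ℤ) :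
    Filter.Tendsto (fun N => Wfn q x N j) Filter.atTop (𝓝 ((-1:ℂ)^j * q^(cexp j) * x^j)) := by
  have hgq : Summable (fun i : ℕ => ‖q^(i+1) * (1:ℂ)‖) := summable_geom_shift hq 1
  have hgq' : Summable (fun i : ℕ => ‖q^(i+1)‖) := by
    refine hgq.congr (fun i => by rw [mul_one])
  have hT1 : Filter.Tendsto (fun N : ℕ => ∏ i ∈ Finset.Ico ((j + N).toNat) (2*N), (1 - q^(i+1)))
      Filter.atTop (𝓝 1) := by
    refine tendsto_tail_prod hgq' (fun M => ?_)
    filter_upwards [Filter.eventually_ge_atTop (M + j.natAbs)] with N hN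
    intro i hi
    have := (Finset.mem_Ico.mp hi).1
    omega
  have hT2 : Filter.Tendsto (fun N : ℕ => ∏ i ∈ Finset.Ico (2*N - (j + N).toNat) (2*N), (1 - q^(i+1)))
      Filter.atTop (𝓝 1) := by
    refine tendsto_tail_prod hgq' (fun M => ?_)
    filter_upwards [Filter.eventually_ge_atTop (M + j.natAbs)] with N hN
    intro i hi
    have := (Finset.mem_Ico.mp hi).1
    omega
  have hmain : Filter.Tendsto
      (fun N : ℕ => ((-1:ℂ)^j * q^(cexp j) * x^j) *
        ((∏ i ∈ Finset.Ico ((j + N).toNat) (2*N), (1 - q^(i+1))) *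
         (∏ i ∈ Finset.Ico (2*N - (j + N).toNat) (2*N), (1 - q^(i+1)))))
      Filter.atTop (𝓝 (((-1:ℂ)^j * q^(cexp j) * x^j) * (1 * 1))) :=
    (hT1.mul hT2).const_mul _
  rw [mul_one, mul_one] at hmain
  refine hmain.congr' ?_
  filter_upwards [Filter.eventually_ge_atTop j.natAbs] with N hN
  have hcond : -(N:ℤ) ≤ j ∧ j ≤ N := by omega
  rw [Wfn, if_pos hcond]
  rw [pq_qb_eq_tails hq (by omega)]

lemma W_bound (hq0 : q ≠ 0) (hq : ‖q‖ < 1) (hx : x ≠ 0) :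
    ∃ C : ℝ, ∀ N : ℕ, ∀ j : ℤ, ‖Wfn q x N j‖ ≤ (‖q‖^(cexp j) * ‖x‖^j) * C := by
  set BB := Real.exp (∑' i : ℕ, ‖q^(i+1)‖) with hBB
  have hgq' : Summable (fun i : ℕ => ‖q^(i+1)‖) := by
    refine (summable_geom_shift hq 1).congr (fun i => by rw [mul_one])
  have hBpos : 0 < BB := Real.exp_pos _
  refine ⟨BB * BB, fun N j => ?_⟩
  rw [Wfn]
  split_ifs with hcond
  · rw [pq_qb_eq_tails hq (by omega)]
    have htail : ∀ a b : ℕ, ‖∏ i ∈ Finset.Ico a b, (1 - q^(i+1))‖ ≤ BB := by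
      intro a b
      refine (norm_prod_one_sub_le_exp _ _).trans (Real.exp_le_exp.2 ?_)
      exact Summable.sum_le_tsum _ (fun i _ => norm_nonneg _) hgq'
    rw [norm_mul, norm_mul, norm_mul, norm_mul, norm_zpow, norm_zpow, norm_zpow]
    have h1 : ‖(-1:ℂ)‖^j = 1 := by norm_num
    rw [h1, one_mul]
    have hq' : (0:ℝ) ≤ ‖q‖^(cexp j) * ‖x‖^j := by
      have : (0:ℝ) < ‖q‖ := norm_pos_iff.mpr hq0
      have : (0:ℝ) < ‖x‖ := norm_pos_iff.mpr hx
      positivity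
    calc ‖q‖^(cexp j) * ‖x‖^j * (‖∏ i ∈ Finset.Ico ((j + N).toNat) (2*N), (1 - q^(i+1))‖ *
          ‖∏ i ∈ Finset.Ico (2*N - (j + N).toNat) (2*N), (1 - q^(i+1))‖)
        ≤ ‖q‖^(cexp j) * ‖x‖^j * (BB * BB) := by
          refine mul_le_mul_of_nonneg_left ?_ hq'
          exact mul_le_mul (htail _ _) (htail _ _) (norm_nonneg _) hBpos.le
      _ = (‖q‖^(cexp j) * ‖x‖^j) * (BB * BB) := by ring
  · rw [norm_zero]
    have h1 : (0:ℝ) < ‖q‖ := norm_pos_iff.mpr hq0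
    have h2 : (0:ℝ) < ‖x‖ := norm_pos_iff.mpr hx
    positivity

lemma jtp (hq0 : q ≠ 0) (hq : ‖q‖ < 1) (hx : x ≠ 0) :
    qPochInf x q * qPochInf (q/x) q * qPochInf q q = th x q := by
  -- limit of the RHS sums
  obtain ⟨C, hC⟩ := W_bound (x := x) hq0 hq hx
  have hsum_bound : Summable (fun j : ℤ => (‖q‖^(cexp j) * ‖x‖^j) * C) :=
    (summable_th_aux (norm_pos_iff.mpr hq0) hq (norm_pos_iff.mpr hx)).mul_right C
  have hRHS : Filter.Tendsto (fun N => ∑' j : ℤ, Wfn q x N j) Filter.atTop (𝓝 (th x q)) := by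
    rw [th]
    exact tendsto_tsum_of_dominated_convergence hsum_bound
      (fun j => W_tendsto hq0 hq j) (Filter.Eventually.of_forall (fun N j => hC N j))
  -- limit of the LHS products
  have hgq' : Summable (fun i : ℕ => ‖q^(i+1)‖) := by
    refine (summable_geom_shift hq 1).congr (fun i => by rw [mul_one])
  have hP0 : Filter.Tendsto (fun N : ℕ => pq q (2*N)) Filter.atTop (𝓝 (qPochInf q q)) := by
    have h1 : qPochInf q q = ∏' i : ℕ, (1 - q^(i+1)) := by
      rw [qPochInf]
      exact tprod_congr (fun i => by rw [pow_succ])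
    rw [h1]
    have h2 := tendsto_prod_range_one_sub hgq'
    have h3 : Filter.Tendsto (fun N : ℕ => 2*N) Filter.atTop Filter.atTop := by
      rw [Filter.tendsto_atTop_atTop]
      intro b
      exact ⟨b, fun a ha => by omega⟩
    exact h2.comp h3
  have hP1 : Filter.Tendsto (fun N : ℕ => ∏ i ∈ Finset.range N, (1 - q^i * x)) Filter.atTop
      (𝓝 (qPochInf x q)) := by
    have hs : Summable (fun i : ℕ => ‖q^i * x‖) := by
      refine Summable.congr (f := fun i : ℕ => ‖x‖ * ‖q‖^i) ?_ (fun i => ?_)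
      · exact (summable_geometric_of_lt_one (norm_nonneg q) hq).mul_left _
      · rw [norm_mul, norm_pow]; ring
    exact tendsto_prod_range_one_sub hs
  have hP2 : Filter.Tendsto (fun N : ℕ => ∏ i ∈ Finset.range N, (1 - q^(i+1) * x⁻¹)) Filter.atTop
      (𝓝 (qPochInf (q/x) q)) := by
    have hs : Summable (fun i : ℕ => ‖q^(i+1) * x⁻¹‖) := summable_geom_shift hq x⁻¹
    have h1 : qPochInf (q/x) q = ∏' i : ℕ, (1 - q^(i+1) * x⁻¹) := by
      rw [qPochInf]
      refine tprod_congr (fun i => ?_)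
      rw [div_eq_mul_inv, pow_succ]
      ring_nf
    rw [h1]
    exact tendsto_prod_range_one_sub hs
  have hLHS : Filter.Tendsto
      (fun N : ℕ => pq q (2*N) * ((∏ i ∈ Finset.range N, (1 - q^i * x)) *
        ∏ i ∈ Finset.range N, (1 - q^(i+1) * x⁻¹)))
      Filter.atTop (𝓝 (qPochInf q q * (qPochInf x q * qPochInf (q/x) q))) :=
    hP0.mul (hP1.mul hP2)
  have heq : (fun N : ℕ => pq q (2*N) * ((∏ i ∈ Finset.range N, (1 - q^i * x)) *
        ∏ i ∈ Finset.range N, (1 - q^(i+1) * x⁻¹)))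
      = fun N => ∑' j : ℤ, Wfn q x N j := by
    funext N
    rw [finite_jtp hq0 hq hx N, sum_eq_tsum_W]
  rw [heq] at hLHS
  have := tendsto_nhds_unique hLHS hRHS
  rw [← this]
  ring
end JTP3

section Theta
variable {Q w z : ℂ}

lemma neg_one_zpow_eq (n : ℤ) : ((-1:ℂ))^(-n) = (-1:ℂ)^n := by
  rw [zpow_neg]
  rw [← inv_zpow, inv_neg, inv_one]

lemma neg_one_zpow_add (m n : ℤ) : ((-1:ℂ))^(m+n) = (-1:ℂ)^m * (-1:ℂ)^n :=
  zpow_add₀ (by norm_num) m n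

lemma th_qper (hQ : Q ≠ 0) (hw : w ≠ 0) (r : ℤ) :
    th (Q^(-r) * w) Q = (-1:ℂ)^r * Q^(cexp r - r^2) * w^r * th w Q := by
  rw [th, th, ← tsum_mul_left]
  rw [← Equiv.tsum_eq (Equiv.addRight r) (fun n => (-1:ℂ)^n * Q^(cexp n) * (Q^(-r) * w)^n)]
  refine tsum_congr (fun n => ?_)
  have h1 : (Equiv.addRight r) n = n + r := rfl
  rw [h1]
  have hQw : Q^(-r) * w ≠ 0 := mul_ne_zero (zpow_ne_zero _ hQ) hw
  rw [mul_zpow, ← zpow_mul]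
  rw [cexp_add, neg_one_zpow_add, zpow_add₀ hQ, zpow_add₀ hw, zpow_add₀ hQ]
  rw [show (-r) * (n + r) = (-(r*n)) + (-(r^2)) by ring, zpow_add₀ hQ]
  rw [show cexp r - r^2 = cexp r + (-(r^2)) by ring, zpow_add₀ hQ]
  have hmerge : Q^(n*r) * Q^(-(r*n)) = 1 := by
    rw [← zpow_add₀ hQ, show n*r + -(r*n) = 0 by ring, zpow_zero]
  linear_combination ((-1:ℂ)^n*(-1:ℂ)^r*Q^(cexp n)*Q^(cexp r)*Q^(-(r^2))*w^n*w^r) * hmerge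
lemma th_inv (hQ : Q ≠ 0) (hz : z ≠ 0) : th z Q = -z * th z⁻¹ Q := by
  rw [th, th, ← tsum_mul_left]
  rw [← Equiv.tsum_eq ((Equiv.neg ℤ).trans (Equiv.addLeft 1)) (fun n => (-1:ℂ)^n * Q^(cexp n) * z^n)]
  refine tsum_congr (fun n => ?_)
  have h1 : ((Equiv.neg ℤ).trans (Equiv.addLeft 1)) n = 1 + (-n) := rfl
  rw [h1]
  have hc : cexp (1 + -n) = cexp n := by
    refine cexp_eq ?_
    have := two_cexp n
    linarith [this]
  rw [hc, neg_one_zpow_add, neg_one_zpow_eq, zpow_add₀ hz, zpow_neg, ← inv_zpow]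
  norm_num
  ring

lemma th_one (hQ : Q ≠ 0) : th 1 Q = 0 := by
  have h := th_inv hQ (one_ne_zero (α := ℂ))
  rw [inv_one] at h
  linear_combination h / 2

end Theta

section Dissect
variable {q x : ℂ}

def shear : ℤ × ℤ ≃ ℤ × ℤ where
  toFun p := (p.1 - 3*p.2, p.2)
  invFun p := (p.1 + 3*p.2, p.2)
  left_inv p := by obtain ⟨a,b⟩ := p; simp
  right_inv p := by obtain ⟨a,b⟩ := p; simp

noncomputable def gfun (q x : ℂ) (k : ℤ) : ℂ :=
  (-1:ℂ)^k * q^(cexp k) * x^k * th (q^(6-3*k)) (q^15)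

lemma hterm_key (hq0 : q ≠ 0) (hx : x ≠ 0) (k n : ℤ) :
    ((-1:ℂ)^(k-3*n) * q^(cexp (k-3*n)) * x^(k-3*n)) * ((-1:ℂ)^n * (q^6)^(cexp n) * (-x^3)^n)
      = ((-1:ℂ)^k * q^(cexp k) * x^k) * ((-1:ℂ)^n * (q^15)^(cexp n) * (q^(6-3*k))^n) := by
  have hB3 : (-x^3 : ℂ)^n = (-1:ℂ)^n * x^(3*n) := by
    rw [show (-x^3 : ℂ) = (-1) * x^3 by ring, mul_zpow, ← zpow_natCast x 3, ← zpow_mul]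
    norm_num
  have hq6 : ((q^6 : ℂ))^(cexp n) = q^(6*cexp n) := by
    rw [← zpow_natCast q 6, ← zpow_mul]; norm_num
  have hq15 : ((q^15 : ℂ))^(cexp n) = q^(15*cexp n) := by
    rw [← zpow_natCast q 15, ← zpow_mul]; norm_num
  have hq63 : ((q^(6-3*k) : ℂ))^n = q^((6-3*k)*n) := by rw [← zpow_mul]
  have hs2 : (-1:ℂ)^(k-3*n) = (-1:ℂ)^k * (-1:ℂ)^n := by
    rw [show k-3*n = k + n + (-4)*n by ring, neg_one_zpow_add, neg_one_zpow_add, zpow_mul]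
    norm_num
  have hnn : (-1:ℂ)^n * (-1:ℂ)^n = 1 := by
    rw [← neg_one_zpow_add, show n+n = 2*n by ring, zpow_mul]
    norm_num
  have hxx : x^(k-3*n) * x^(3*n) = x^k := by
    rw [← zpow_add₀ hx, show k-3*n+3*n = k by ring]
  have hE : q^(cexp (k-3*n)) * q^(6*cexp n) = q^(cexp k) * (q^(15*cexp n) * q^((6-3*k)*n)) := by
    rw [← zpow_add₀ hq0, ← zpow_add₀ hq0, ← zpow_add₀ hq0]
    congr 1
    refine mul_left_cancel₀ (two_ne_zero (α := ℤ)) ?_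
    linear_combination two_cexp (k-3*n) + (-9) * two_cexp n + (-1) * two_cexp k
  rw [hB3, hq6, hq15, hq63, hs2]
  linear_combination
    (((-1:ℂ)^k * (-1:ℂ)^n) * (q^(cexp (k-3*n)) * q^(6*cexp n)) * (x^(k-3*n)*x^(3*n))) * hnn
    + (((-1:ℂ)^k * (-1:ℂ)^n) * (q^(cexp (k-3*n)) * q^(6*cexp n))) * hxx
    + (((-1:ℂ)^k * (-1:ℂ)^n) * x^k) * hE

lemma th_prod_eq (hq0 : q ≠ 0) (hq : ‖q‖ < 1) (hx : x ≠ 0) :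
    th x q * th (-x^3) (q^6) = ∑' k : ℤ, gfun q x k
      ∧ Summable (fun k : ℤ => gfun q x k) := by
  have hq6ne : (q^6 : ℂ) ≠ 0 := pow_ne_zero _ hq0
  have hq6lt : ‖(q^6 : ℂ)‖ < 1 := by
    rw [norm_pow]
    calc ‖q‖^6 ≤ ‖q‖^1 := pow_le_pow_of_le_one (norm_nonneg q) hq.le (by omega)
      _ < 1 := by simpa using hq
  have hx3 : (-x^3 : ℂ) ≠ 0 := neg_ne_zero.mpr (pow_ne_zero 3 hx)
  have hA : Summable (fun n : ℤ => ‖(-1:ℂ)^n * q^(cexp n) * x^n‖) := summable_th_norm hq0 hq hx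
  have hB : Summable (fun n : ℤ => ‖(-1:ℂ)^n * (q^6)^(cexp n) * (-x^3)^n‖) :=
    summable_th_norm hq6ne hq6lt hx3
  set f : ℤ × ℤ → ℂ := fun z =>
    ((-1:ℂ)^z.1 * q^(cexp z.1) * x^z.1) * ((-1:ℂ)^z.2 * (q^6)^(cexp z.2) * (-x^3)^z.2) with hf
  have hfsum : Summable f := (hA.mul_norm hB).of_norm
  have hprod : th x q * th (-x^3) (q^6) = ∑' z : ℤ × ℤ, f z :=
    tsum_mul_tsum_of_summable_norm hA hB
  have hGsum : Summable (f ∘ shear) := hfsum.comp_injective shear.injective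
  have hGeq : ∑' p : ℤ × ℤ, f (shear p) = ∑' z : ℤ × ℤ, f z := Equiv.tsum_eq shear f
  have hslice : ∀ k : ℤ, ∑' n : ℤ, f (shear (k, n)) = gfun q x k := by
    intro k
    have h1 : ∀ n : ℤ, f (shear (k, n))
        = ((-1:ℂ)^k * q^(cexp k) * x^k) * ((-1:ℂ)^n * (q^15)^(cexp n) * (q^(6-3*k))^n) := by
      intro n
      exact hterm_key hq0 hx k n
    rw [tsum_congr h1, tsum_mul_left]
    rfl
  have hgsum : Summable (fun k : ℤ => gfun q x k) := by
    refine (Summable.congr ?_ hslice)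
    exact ⟨∑' p : ℤ × ℤ, f (shear p), HasSum.prod_fiberwise hGsum.hasSum
      (fun k => (hGsum.prod_factor k).hasSum)⟩
  constructor
  · have hps : ∑' p : ℤ × ℤ, f (shear p) = ∑' k : ℤ, ∑' n : ℤ, f (shear (k, n)) :=
      Summable.tsum_prod' hGsum (fun k => hGsum.prod_factor k)
    rw [hprod, ← hGeq, hps]
    exact tsum_congr hslice
  · exact hgsum

end Dissect

section Classes
variable {q x : ℂ}

lemma zpow_pow_mul (hq0 : q ≠ 0) (m : ℕ) (e : ℤ) : ((q^m : ℂ))^e = q^((m:ℤ)*e) := by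
  rw [← zpow_natCast q m, ← zpow_mul]

lemma neg_one_zpow_two_mul (r : ℤ) : (-1:ℂ)^r * (-1:ℂ)^r = 1 := by
  rw [← neg_one_zpow_add, show r+r = 2*r by ring, zpow_mul]
  norm_num

lemma class0 (hq0 : q ≠ 0) (hx : x ≠ 0) :
    ∑' r : ℤ, gfun q x (5*r + 0) = th (q^6) (q^15) * th (-(q * x^5)) (q^10) := by
  have hq15 : (q^15 : ℂ) ≠ 0 := pow_ne_zero _ hq0
  have hq6 : (q^6 : ℂ) ≠ 0 := pow_ne_zero _ hq0
  have key : ∀ r : ℤ, gfun q x (5*r+0)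
      = th (q^6) (q^15) * ((-1:ℂ)^r * (q^10)^(cexp r) * (-(q * x^5))^r) := by
    intro r
    rw [gfun]
    have hz : (q:ℂ)^((6:ℤ)-3*(5*r+0)) = (q^15:ℂ)^(-r) * q^6 := by
      rw [zpow_pow_mul hq0 15 (-r), ← zpow_natCast q 6, ← zpow_add₀ hq0]
      congr 1
      push_cast
      ring
    rw [hz, th_qper hq15 hq6 r]
    rw [zpow_pow_mul hq0 15 (cexp r - r^2), zpow_pow_mul hq0 6 r, zpow_pow_mul hq0 10 (cexp r)]
    have hdec : (-(q * x^5) : ℂ)^r = (-1:ℂ)^r * (q^(1:ℤ)*x^(5:ℤ))^r := by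
      rw [show -(q * x^5 : ℂ) = (-1) * (q^(1:ℤ) * x^(5:ℤ)) by
        rw [zpow_one, show (5:ℤ) = ((5:ℕ):ℤ) by norm_num, zpow_natCast]; ring, mul_zpow]
    rw [hdec, mul_zpow, ← zpow_mul, ← zpow_mul]
    push_cast
    have hs1 : (-1:ℂ)^(5*r+0) = (-1:ℂ)^r := by
      rw [show 5*r+0 = 5*r by ring, zpow_mul, show ((-1:ℂ))^(5:ℤ) = -1 by norm_num]
    have hE : q^(cexp (5*r+0)) * (q^(15*(cexp r - r^2)) * q^((6:ℤ)*r)) = q^((10:ℤ)*cexp r) * q^((1:ℤ)*r) := by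
      rw [← zpow_add₀ hq0, ← zpow_add₀ hq0, ← zpow_add₀ hq0]
      congr 1
      refine mul_left_cancel₀ (two_ne_zero (α := ℤ)) ?_
      linear_combination two_cexp (5*r+0) + 5 * two_cexp r
    rw [hs1]
    have hxp : x^(5*r+0) = x^((5:ℤ)*r) := by norm_num
    rw [hxp]
    linear_combination ((-1:ℂ)^r * (-1:ℂ)^r * x^((5:ℤ)*r) * th (q^6) (q^15)) * hE
  rw [tsum_congr key, tsum_mul_left]
  rfl

end Classes

section Classes2
variable {q x : ℂ}

lemma class1 (hq0 : q ≠ 0) (hx : x ≠ 0) :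
    ∑' r : ℤ, gfun q x (5*r + 1) = -(x * th (q^3) (q^15)) * th (-(q^3 * x^5)) (q^10) := by
  have hq15 : (q^15 : ℂ) ≠ 0 := pow_ne_zero _ hq0
  have hq3 : (q^3 : ℂ) ≠ 0 := pow_ne_zero _ hq0
  have key : ∀ r : ℤ, gfun q x (5*r+1)
      = (-(x * th (q^3) (q^15))) * ((-1:ℂ)^r * (q^10)^(cexp r) * (-(q^3 * x^5))^r) := by
    intro r
    rw [gfun]
    have hz : (q:ℂ)^((6:ℤ)-3*(5*r+1)) = (q^15:ℂ)^(-r) * q^3 := by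
      rw [zpow_pow_mul hq0 15 (-r), ← zpow_natCast q 3, ← zpow_add₀ hq0]
      congr 1
      push_cast
      ring
    rw [hz, th_qper hq15 hq3 r]
    rw [zpow_pow_mul hq0 15 (cexp r - r^2), zpow_pow_mul hq0 3 r, zpow_pow_mul hq0 10 (cexp r)]
    have hdec : (-(q^3 * x^5) : ℂ)^r = (-1:ℂ)^r * (q^((3:ℕ):ℤ)*x^((5:ℕ):ℤ))^r := by
      rw [show -(q^3 * x^5 : ℂ) = (-1) * (q^((3:ℕ):ℤ) * x^((5:ℕ):ℤ)) by
        rw [zpow_natCast, zpow_natCast]; ring, mul_zpow]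
    rw [hdec, mul_zpow, ← zpow_mul, ← zpow_mul]
    push_cast
    have hs1 : (-1:ℂ)^(5*r+1) = -((-1:ℂ)^r) := by
      rw [neg_one_zpow_add (5*r) 1, zpow_mul, show ((-1:ℂ))^(5:ℤ) = -1 by norm_num, zpow_one]
      ring
    have hE : q^(cexp (5*r+1)) * (q^(15*(cexp r - r^2)) * q^((3:ℤ)*r)) = q^((10:ℤ)*cexp r) * q^((3:ℤ)*r) := by
      rw [← zpow_add₀ hq0, ← zpow_add₀ hq0, ← zpow_add₀ hq0]
      congr 1
      refine mul_left_cancel₀ (two_ne_zero (α := ℤ)) ?_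
      linear_combination two_cexp (5*r+1) + 5 * two_cexp r
    have hxp : x^(5*r+1) = x * x^((5:ℤ)*r) := by
      rw [show (5:ℤ)*r+1 = 5*r+1 by ring, zpow_add₀ hx (5*r) 1, zpow_one]
      ring
    rw [hs1, hxp]
    linear_combination (-((-1:ℂ)^r * (-1:ℂ)^r * x * x^((5:ℤ)*r) * th (q^3) (q^15))) * hE
  rw [tsum_congr key, tsum_mul_left]
  rfl

lemma class2 (hq0 : q ≠ 0) : ∑' r : ℤ, gfun q x (5*r + 2) = 0 := by
  have hq15 : (q^15 : ℂ) ≠ 0 := pow_ne_zero _ hq0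
  have key : ∀ r : ℤ, gfun q x (5*r+2) = 0 := by
    intro r
    rw [gfun]
    have hz : (q:ℂ)^((6:ℤ)-3*(5*r+2)) = (q^15:ℂ)^(-r) * 1 := by
      rw [zpow_pow_mul hq0 15 (-r), mul_one]
      congr 1
      push_cast
      ring
    rw [hz, th_qper hq15 one_ne_zero r, th_one hq15]
    ring
  rw [tsum_congr key]
  exact tsum_zero

lemma class3 (hq0 : q ≠ 0) (hx : x ≠ 0) :
    ∑' r : ℤ, gfun q x (5*r + 3)
      = (q^3 * x^(-2:ℤ) * th (q^3) (q^15)) * th (-(q^(-3:ℤ) * x^5)) (q^10) := by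
  have hq15 : (q^15 : ℂ) ≠ 0 := pow_ne_zero _ hq0
  have hqm3 : (q^(-3:ℤ) : ℂ) ≠ 0 := zpow_ne_zero _ hq0
  set sA : ℤ → ℂ := fun r' => (-1:ℂ)^r' * (q^10)^(cexp r') * (-(q^(-3:ℤ) * x^5))^r' with hsA
  have key : ∀ r : ℤ, gfun q x (5*r+3) = (q^3 * x^(-2:ℤ) * th (q^3) (q^15)) * sA (r+1) := by
    intro r
    rw [gfun, hsA]
    dsimp only
    have hz : (q:ℂ)^((6:ℤ)-3*(5*r+3)) = (q^15:ℂ)^(-r) * q^(-3:ℤ) := by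
      rw [zpow_pow_mul hq0 15 (-r), ← zpow_add₀ hq0]
      congr 1
      push_cast
      ring
    rw [hz, th_qper hq15 hqm3 r]
    have hinv : th (q^(-3:ℤ)) (q^15) = -(q^(-3:ℤ)) * th (q^3) (q^15) := by
      rw [th_inv hq15 hqm3]
      congr 2
      rw [← zpow_neg, neg_neg, ← zpow_natCast q 3]
      norm_num
    rw [hinv]
    rw [zpow_pow_mul hq0 15 (cexp r - r^2), zpow_pow_mul hq0 10 (cexp (r+1))]
    have hdec : (-(q^(-3:ℤ) * x^5) : ℂ)^(r+1) = (-1:ℂ)^(r+1) * (q^(-3:ℤ)*x^((5:ℕ):ℤ))^(r+1) := by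
      rw [show -(q^(-3:ℤ) * x^5 : ℂ) = (-1) * (q^(-3:ℤ) * x^((5:ℕ):ℤ)) by
        rw [zpow_natCast]; ring, mul_zpow]
    rw [hdec, mul_zpow, ← zpow_mul, ← zpow_mul, ← zpow_mul]
    push_cast
    have hs1 : (-1:ℂ)^(5*r+3) = -((-1:ℂ)^r) := by
      rw [neg_one_zpow_add (5*r) 3, zpow_mul, show ((-1:ℂ))^(5:ℤ) = -1 by norm_num,
        show ((-1:ℂ))^(3:ℤ) = -1 by norm_num]
      ring
    have hs2 : (-1:ℂ)^(r+1) = -((-1:ℂ)^r) := by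
      rw [neg_one_zpow_add r 1, zpow_one]
      ring
    have hE : q^(cexp (5*r+3)) * (q^(15*(cexp r - r^2)) * q^((-3:ℤ)*r)) * q^(-3:ℤ)
        = q^3 * (q^((10:ℤ)*cexp (r+1)) * q^((-3:ℤ)*(r+1))) := by
      rw [show (q^3 : ℂ) = q^((3:ℤ)) by rw [← zpow_natCast q 3]; norm_num]
      rw [← zpow_add₀ hq0, ← zpow_add₀ hq0, ← zpow_add₀ hq0, ← zpow_add₀ hq0, ← zpow_add₀ hq0]
      congr 1
      refine mul_left_cancel₀ (two_ne_zero (α := ℤ)) ?_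
      linear_combination two_cexp (5*r+3) + 15 * two_cexp r + (-10) * two_cexp (r+1)
    have hxp : x^(5*r+3) = x^(-2:ℤ) * x^((5:ℤ)*(r+1)) := by
      rw [← zpow_add₀ hx]
      congr 1
      ring
    rw [hs1, hs2, hxp]
    linear_combination ((-1:ℂ)^r * (-1:ℂ)^r * x^(-2:ℤ) * x^((5:ℤ)*(r+1)) * th (q^3) (q^15)) * hE
  rw [tsum_congr key, tsum_mul_left]
  congr 1
  calc ∑' (r:ℤ), sA (r+1) = ∑' (r:ℤ), sA ((Equiv.addRight (1:ℤ)) r) := tsum_congr (fun r => rfl)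
    _ = ∑' (r:ℤ), sA r := Equiv.tsum_eq _ _
    _ = _ := rfl

lemma class4 (hq0 : q ≠ 0) (hx : x ≠ 0) :
    ∑' r : ℤ, gfun q x (5*r + 4)
      = -(q * x⁻¹ * th (q^6) (q^15)) * th (-(q^(-1:ℤ) * x^5)) (q^10) := by
  have hq15 : (q^15 : ℂ) ≠ 0 := pow_ne_zero _ hq0
  have hqm6 : (q^(-6:ℤ) : ℂ) ≠ 0 := zpow_ne_zero _ hq0
  set sD : ℤ → ℂ := fun r' => (-1:ℂ)^r' * (q^10)^(cexp r') * (-(q^(-1:ℤ) * x^5))^r' with hsD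
  have key : ∀ r : ℤ, gfun q x (5*r+4) = (-(q * x⁻¹ * th (q^6) (q^15))) * sD (r+1) := by
    intro r
    rw [gfun, hsD]
    dsimp only
    have hz : (q:ℂ)^((6:ℤ)-3*(5*r+4)) = (q^15:ℂ)^(-r) * q^(-6:ℤ) := by
      rw [zpow_pow_mul hq0 15 (-r), ← zpow_add₀ hq0]
      congr 1
      push_cast
      ring
    rw [hz, th_qper hq15 hqm6 r]
    have hinv : th (q^(-6:ℤ)) (q^15) = -(q^(-6:ℤ)) * th (q^6) (q^15) := by
      rw [th_inv hq15 hqm6]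
      congr 2
      rw [← zpow_neg, neg_neg, ← zpow_natCast q 6]
      norm_num
    rw [hinv]
    rw [zpow_pow_mul hq0 15 (cexp r - r^2), zpow_pow_mul hq0 10 (cexp (r+1))]
    have hdec : (-(q^(-1:ℤ) * x^5) : ℂ)^(r+1) = (-1:ℂ)^(r+1) * (q^(-1:ℤ)*x^((5:ℕ):ℤ))^(r+1) := by
      rw [show -(q^(-1:ℤ) * x^5 : ℂ) = (-1) * (q^(-1:ℤ) * x^((5:ℕ):ℤ)) by
        rw [zpow_natCast]; ring, mul_zpow]
    rw [hdec, mul_zpow, ← zpow_mul, ← zpow_mul, ← zpow_mul]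
    push_cast
    have hs1 : (-1:ℂ)^(5*r+4) = (-1:ℂ)^r := by
      rw [neg_one_zpow_add (5*r) 4, zpow_mul, show ((-1:ℂ))^(5:ℤ) = -1 by norm_num,
        show ((-1:ℂ))^(4:ℤ) = 1 by norm_num]
      ring
    have hs2 : (-1:ℂ)^(r+1) = -((-1:ℂ)^r) := by
      rw [neg_one_zpow_add r 1, zpow_one]
      ring
    have hE : q^(cexp (5*r+4)) * (q^(15*(cexp r - r^2)) * q^((-6:ℤ)*r)) * q^(-6:ℤ)
        = q * (q^((10:ℤ)*cexp (r+1)) * q^((-1:ℤ)*(r+1))) := by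
      have t : q^(cexp (5*r+4)) * (q^(15*(cexp r - r^2)) * q^((-6:ℤ)*r)) * q^(-6:ℤ)
          = q^((1:ℤ)) * (q^((10:ℤ)*cexp (r+1)) * q^((-1:ℤ)*(r+1))) := by
        rw [← zpow_add₀ hq0, ← zpow_add₀ hq0, ← zpow_add₀ hq0, ← zpow_add₀ hq0, ← zpow_add₀ hq0]
        congr 1
        refine mul_left_cancel₀ (two_ne_zero (α := ℤ)) ?_
        linear_combination two_cexp (5*r+4) + 15 * two_cexp r + (-10) * two_cexp (r+1)
      rw [zpow_one] at t
      exact t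
    have hxp : x^(5*r+4) = x⁻¹ * x^((5:ℤ)*(r+1)) := by
      rw [show (x⁻¹:ℂ) = x^((-1:ℤ)) from (zpow_neg_one x).symm, ← zpow_add₀ hx]
      congr 1
      ring
    rw [hs1, hs2, hxp]
    linear_combination (-((-1:ℂ)^r * (-1:ℂ)^r * x⁻¹ * x^((5:ℤ)*(r+1)) * th (q^6) (q^15))) * hE
  rw [tsum_congr key, tsum_mul_left]
  congr 1
  calc ∑' (r:ℤ), sD (r+1) = ∑' (r:ℤ), sD ((Equiv.addRight (1:ℤ)) r) := tsum_congr (fun r => rfl)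
    _ = ∑' (r:ℤ), sD r := Equiv.tsum_eq _ _
    _ = _ := rfl

end Classes2

section Final
variable {q x : ℂ}

def e5 : (Fin 5) × ℤ ≃ ℤ where
  toFun p := 5 * p.2 + (p.1.val : ℤ)
  invFun k := (⟨(k % 5).toNat, by omega⟩, k / 5)
  left_inv p := by
    obtain ⟨c, r⟩ := p
    have hc := c.isLt
    have hc2 : ((c.val:ℕ):ℤ) < 5 := by exact_mod_cast hc
    have hc0 : (0:ℤ) ≤ ((c.val:ℕ):ℤ) := Int.ofNat_nonneg _
    refine Prod.ext ?_ ?_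
    · apply Fin.ext
      show ((5 * r + (c.val:ℤ)) % 5).toNat = c.val
      omega
    · show (5 * r + (c.val:ℤ)) / 5 = r
      omega
  right_inv k := by
    show 5 * (k / 5) + (((k % 5).toNat : ℕ) : ℤ) = k
    omega

lemma g_dissect (hg : Summable (fun k : ℤ => gfun q x k)) :
    ∑' k : ℤ, gfun q x k
      = (∑' r : ℤ, gfun q x (5*r + 0)) + (∑' r : ℤ, gfun q x (5*r + 1))
        + (∑' r : ℤ, gfun q x (5*r + 2)) + (∑' r : ℤ, gfun q x (5*r + 3))
        + (∑' r : ℤ, gfun q x (5*r + 4)) := by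
  have h2 : Summable (fun p : (Fin 5) × ℤ => gfun q x (e5 p)) := hg.comp_injective e5.injective
  have h1 : ∑' p : (Fin 5) × ℤ, gfun q x (e5 p) = ∑' k, gfun q x k := Equiv.tsum_eq e5 _
  rw [← h1]
  have h3 : ∑' p : (Fin 5) × ℤ, gfun q x (e5 p)
      = ∑' c : Fin 5, ∑' r : ℤ, gfun q x (e5 (c, r)) := Summable.tsum_prod' h2 (fun c => h2.prod_factor c)
  rw [h3, tsum_fintype, Fin.sum_univ_five]
  have he : ∀ (c : Fin 5) (r : ℤ), e5 (c, r) = 5*r + (c.val : ℤ) := fun c r => rfl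
  have k0 : ∑' r : ℤ, gfun q x (e5 ((0:Fin 5), r)) = ∑' r : ℤ, gfun q x (5*r+0) :=
    tsum_congr (fun r => by rw [he]; norm_num)
  have k1 : ∑' r : ℤ, gfun q x (e5 ((1:Fin 5), r)) = ∑' r : ℤ, gfun q x (5*r+1) :=
    tsum_congr (fun r => by rw [he]; norm_num)
  have k2 : ∑' r : ℤ, gfun q x (e5 ((2:Fin 5), r)) = ∑' r : ℤ, gfun q x (5*r+2) :=
    tsum_congr (fun r => by rw [he]; norm_num)
  have k3 : ∑' r : ℤ, gfun q x (e5 ((3:Fin 5), r)) = ∑' r : ℤ, gfun q x (5*r+3) :=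
    tsum_congr (fun r => by rw [he]; rfl)
  have k4 : ∑' r : ℤ, gfun q x (e5 ((4:Fin 5), r)) = ∑' r : ℤ, gfun q x (5*r+4) :=
    tsum_congr (fun r => by rw [he]; rfl)
  rw [k0, k1, k2, k3, k4]

lemma jt_eq_th (hq0 : q ≠ 0) (hq : ‖q‖ < 1) (hx : x ≠ 0) : jt x q = th x q := by
  rw [jt]
  exact jtp hq0 hq hx

lemma norm_pow_lt_one (hq : ‖q‖ < 1) {m : ℕ} (hm : 0 < m) : ‖q^m‖ < 1 := by
  rw [norm_pow]
  calc ‖q‖^m ≤ ‖q‖^1 := pow_le_pow_of_le_one (norm_nonneg q) hq.le (by omega)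
    _ < 1 := by simpa using hq
end Final

theorem jt_cube_split (q x : ℂ) (hq0 : 0 < ‖q‖)
    (hq1 : ‖q‖ < 1) (hx : x ≠ 0) :
    jt x q * jt (-x ^ 3) (q ^ 6) =
      jt (q ^ 3) (q ^ 15) *
        (q ^ 3 * x ^ (-2 : ℤ) * jt (-(q ^ (-3 : ℤ) * x ^ 5)) (q ^ 10) -
          x * jt (-(q ^ 3 * x ^ 5)) (q ^ 10)) +
      jt (q ^ 6) (q ^ 15) *
        (jt (-(q * x ^ 5)) (q ^ 10) -
          q * x⁻¹ * jt (-(q ^ (-1 : ℤ) * x ^ 5)) (q ^ 10)) := by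
  have hq0' : q ≠ 0 := by
    intro h
    rw [h] at hq0
    simp at hq0
  have hq1' : ‖q‖ < 1 := hq1
  have h6 : ‖q^6‖ < 1 := norm_pow_lt_one hq1' (by norm_num)
  have h10 : ‖q^10‖ < 1 := norm_pow_lt_one hq1' (by norm_num)
  have h15 : ‖q^15‖ < 1 := norm_pow_lt_one hq1' (by norm_num)
  have hx3 : (-x^3 : ℂ) ≠ 0 := neg_ne_zero.mpr (pow_ne_zero 3 hx)
  have hq3 : (q^3 : ℂ) ≠ 0 := pow_ne_zero _ hq0'
  have hq6 : (q^6 : ℂ) ≠ 0 := pow_ne_zero _ hq0'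
  have hq10 : (q^10 : ℂ) ≠ 0 := pow_ne_zero _ hq0'
  have hq15 : (q^15 : ℂ) ≠ 0 := pow_ne_zero _ hq0'
  have hx5 : (x^5 : ℂ) ≠ 0 := pow_ne_zero _ hx
  have ha1 : (-(q^(-3:ℤ) * x^5) : ℂ) ≠ 0 :=
    neg_ne_zero.mpr (mul_ne_zero (zpow_ne_zero _ hq0') hx5)
  have ha2 : (-(q^3 * x^5) : ℂ) ≠ 0 := neg_ne_zero.mpr (mul_ne_zero hq3 hx5)
  have ha3 : (-(q * x^5) : ℂ) ≠ 0 := neg_ne_zero.mpr (mul_ne_zero hq0' hx5)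
  have ha4 : (-(q^(-1:ℤ) * x^5) : ℂ) ≠ 0 :=
    neg_ne_zero.mpr (mul_ne_zero (zpow_ne_zero _ hq0') hx5)
  rw [jt_eq_th hq0' hq1' hx, jt_eq_th hq6 h6 hx3, jt_eq_th hq15 h15 hq3,
    jt_eq_th hq15 h15 hq6, jt_eq_th hq10 h10 ha1, jt_eq_th hq10 h10 ha2,
    jt_eq_th hq10 h10 ha3, jt_eq_th hq10 h10 ha4]
  obtain ⟨hprod, hgsum⟩ := th_prod_eq hq0' hq1' hx
  rw [hprod, g_dissect hgsum, class0 hq0' hx, class1 hq0' hx, class2 hq0', class3 hq0' hx,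
    class4 hq0' hx]
  ring
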